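/- Let f : [0,L]×ℝ → ℝ be continuous and compactly supported in its second argument. Then for every x ∈ (0,L), x ↦ E(f,x) is differentiable at x with ∂_x E(f,x) = ∫_ℝ f(x,v) dv − 1; moreover, if ∫₀^L ∫_ℝ f(y,v) dv dy = L, then E(f,0) = E(f,L). -/

import Mathlib

open MeasureTheory Real Set

/-- The electric field determined by the density `f` via the kernel
`K(x,y) = y/L` for `y < x` and `K(x,y) = y/L - 1` for `y > x`. -/
noncomputable def Efield (L : ℝ) (f : ℝ → ℝ → ℝ) (x : ℝ) : ℝ :=
  ∫ y in (0:ℝ)..L, (if y < x then y / L else y / L - 1) * ((∫ v : ℝ, f y v) - 1)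

set_option maxHeartbeats 1000000 in
/-- For `f` continuous on `[0,L] × ℝ` and compactly supported in its
second argument, `x ↦ E(f,x)` is differentiable at every `x ∈ (0,L)` with derivative
`∫_ℝ f(x,v) dv - 1`; moreover, if `∫₀^L ∫_ℝ f(y,v) dv dy = L`, then `E(f,0) = E(f,L)`. -/
theorem efield_hasDerivAt_and_periodic
    (L : ℝ) (hL : 0 < L) (f : ℝ → ℝ → ℝ)
    (hf_cont : ContinuousOn (fun p : ℝ × ℝ => f p.1 p.2)
      (Set.Icc 0 L ×ˢ (Set.univ : Set ℝ)))
    (hf_supp : ∃ R : ℝ, ∀ x v, R ≤ |v| → f x v = 0) :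
    (∀ x ∈ Set.Ioo (0:ℝ) L,
      HasDerivAt (Efield L f) ((∫ v : ℝ, f x v) - 1) x) ∧
    ((∫ y in (0:ℝ)..L, (∫ v : ℝ, f y v)) = L → Efield L f 0 = Efield L f L) := by
  obtain ⟨R, hR⟩ := hf_supp
  set g : ℝ → ℝ := fun y => (∫ v : ℝ, f y v) - 1 with hg_def
  -- continuity of the density
  have hρ : ContinuousOn (fun y => ∫ v : ℝ, f y v) (Icc 0 L) := by
    apply continuousOn_integral_of_compact_support (k := Icc (-(|R|+1)) (|R|+1))
      isCompact_Icc hf_cont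
    intro p v _ hv
    apply hR
    rcases abs_cases v with ⟨h1, _⟩ | ⟨h1, _⟩
    · simp only [mem_Icc, not_and_or, not_le] at hv
      rcases hv with h | h
      · nlinarith [abs_nonneg R]
      · nlinarith [abs_nonneg R, le_abs_self R]
    · simp only [mem_Icc, not_and_or, not_le] at hv
      rcases hv with h | h
      · nlinarith [abs_nonneg R, le_abs_self R]
      · nlinarith [abs_nonneg R]
  have hgcont : ContinuousOn g (Icc 0 L) := hρ.sub continuousOn_const
  have hgInt : ∀ a b, a ∈ Icc (0:ℝ) L → b ∈ Icc (0:ℝ) L →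
      IntervalIntegrable g volume a b := fun a b ha hb =>
    (hgcont.mono (uIcc_subset_Icc ha hb)).intervalIntegrable
  have hkint : IntervalIntegrable (fun y => y / L * g y) volume 0 L := by
    exact (((continuousOn_id.div_const L).mul hgcont).mono
      (by rw [uIcc_of_le hL.le])).intervalIntegrable
  -- indicator part integrability and integral, for x ∈ Icc 0 L
  have hindInt : ∀ x ∈ Icc (0:ℝ) L,
      IntervalIntegrable (fun y => (if y < x then 0 else 1) * g y) volume 0 L := by
    intro x hx
    have h1 : IntervalIntegrable (fun y => (if y < x then 0 else 1) * g y) volume 0 x := by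
      apply IntervalIntegrable.congr_ae (f := fun _ => (0:ℝ))
        intervalIntegrable_const
      have : (volume : Measure ℝ) {x} = 0 := measure_singleton x
      rw [Filter.EventuallyEq, ae_restrict_iff' measurableSet_uIoc]
      filter_upwards [measure_eq_zero_iff_ae_notMem.mp this] with y hy hyI
      rw [uIoc_of_le hx.1] at hyI
      have : y < x := lt_of_le_of_ne hyI.2 hy
      simp [this]
    have h2 : IntervalIntegrable (fun y => (if y < x then 0 else 1) * g y) volume x L := by
      apply IntervalIntegrable.congr_ae (f := g) (hgInt x L hx (by simp [hL.le]))
      rw [Filter.EventuallyEq, ae_restrict_iff' measurableSet_uIoc]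
      filter_upwards with y hyI
      rw [uIoc_of_le hx.2] at hyI
      simp [not_lt.mpr hyI.1.le]
    exact h1.trans h2
  have hindVal : ∀ x ∈ Icc (0:ℝ) L,
      (∫ y in (0:ℝ)..L, (if y < x then 0 else 1) * g y) = ∫ y in x..L, g y := by
    intro x hx
    have hA : IntervalIntegrable (fun y => (if y < x then 0 else 1) * g y) volume 0 x := by
      apply (hindInt x hx).mono_set
      rw [uIcc_of_le hx.1, uIcc_of_le hL.le]
      exact Icc_subset_Icc le_rfl hx.2
    have hB : IntervalIntegrable (fun y => (if y < x then 0 else 1) * g y) volume x L := by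
      apply (hindInt x hx).mono_set
      rw [uIcc_of_le hx.2, uIcc_of_le hL.le]
      exact Icc_subset_Icc hx.1 le_rfl
    have hsplit : (∫ y in (0:ℝ)..L, (if y < x then 0 else 1) * g y)
        = (∫ y in (0:ℝ)..x, (if y < x then 0 else 1) * g y)
          + ∫ y in x..L, (if y < x then 0 else 1) * g y :=
      (intervalIntegral.integral_add_adjacent_intervals hA hB).symm
    have h1 : (∫ y in (0:ℝ)..x, (if y < x then 0 else 1) * g y) = 0 := by
      have h1' : (∫ y in (0:ℝ)..x, (if y < x then 0 else 1) * g y)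
          = ∫ _ in (0:ℝ)..x, (0:ℝ) := by
        apply intervalIntegral.integral_congr_ae
        filter_upwards [measure_eq_zero_iff_ae_notMem.mp (measure_singleton x)] with y hy hyI
        rw [uIoc_of_le hx.1] at hyI
        have : y < x := lt_of_le_of_ne hyI.2 hy
        simp [this]
      rw [h1', intervalIntegral.integral_zero]
    have h2 : (∫ y in x..L, (if y < x then 0 else 1) * g y) = ∫ y in x..L, g y := by
      apply intervalIntegral.integral_congr_ae
      filter_upwards with y hyI
      rw [uIoc_of_le hx.2] at hyI
      simp [not_lt.mpr hyI.1.le]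
    rw [hsplit, h1, h2, zero_add]
  -- the key formula
  have hform : ∀ x ∈ Icc (0:ℝ) L,
      Efield L f x = (∫ y in (0:ℝ)..L, y / L * g y) - ∫ y in x..L, g y := by
    intro x hx
    have : Efield L f x
        = ∫ y in (0:ℝ)..L, (y / L * g y - (if y < x then 0 else 1) * g y) := by
      unfold Efield
      apply intervalIntegral.integral_congr
      intro y _
      by_cases h : y < x <;> simp [h, hg_def] <;> ring
    rw [this, intervalIntegral.integral_sub hkint (hindInt x hx), hindVal x hx]
  constructor
  · intro x hx
    have hxI : x ∈ Icc (0:ℝ) L := Ioo_subset_Icc_self hx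
    have hmem : Icc (0:ℝ) L ∈ nhds x := Icc_mem_nhds hx.1 hx.2
    have hcont : ContinuousAt g x := hgcont.continuousAt hmem
    have hFTC : HasDerivAt (fun u => ∫ y in (0:ℝ)..u, g y) (g x) x :=
      intervalIntegral.integral_hasDerivAt_right (hgInt 0 x (by simp [hL.le]) hxI)
        ((hgcont.mono Ioo_subset_Icc_self).stronglyMeasurableAtFilter isOpen_Ioo x hx)
        hcont
    set A : ℝ := ∫ y in (0:ℝ)..L, y / L * g y with hA
    set B : ℝ := ∫ y in (0:ℝ)..L, g y with hB
    have heq : Efield L f =ᶠ[nhds x]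
        fun u => A - (B - ∫ y in (0:ℝ)..u, g y) := by
      filter_upwards [Ioo_mem_nhds hx.1 hx.2] with u hu
      have huI : u ∈ Icc (0:ℝ) L := Ioo_subset_Icc_self hu
      rw [hform u huI]
      have hadd : (∫ y in (0:ℝ)..u, g y) + (∫ y in u..L, g y) = B :=
        intervalIntegral.integral_add_adjacent_intervals
          (hgInt 0 u (by simp [hL.le]) huI) (hgInt u L huI (by simp [hL.le]))
      have : (∫ y in u..L, g y) = B - ∫ y in (0:ℝ)..u, g y := by linarith
      rw [this]
    have hD : HasDerivAt (fun u => A - (B - ∫ y in (0:ℝ)..u, g y)) (g x) x := by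
      have := (hFTC.const_sub B).const_sub A
      simpa using this
    exact hD.congr_of_eventuallyEq heq
  · intro hmass
    have hρint : IntervalIntegrable (fun y => ∫ v : ℝ, f y v) volume 0 L :=
      (hρ.mono (by rw [uIcc_of_le hL.le])).intervalIntegrable
    have hBzero : (∫ y in (0:ℝ)..L, g y) = 0 := by
      have : (∫ y in (0:ℝ)..L, g y)
          = (∫ y in (0:ℝ)..L, (∫ v : ℝ, f y v)) - ∫ y in (0:ℝ)..L, (1:ℝ) :=
        intervalIntegral.integral_sub hρint intervalIntegrable_const
      rw [this, hmass]
      simp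
    have h0 : Efield L f 0 = (∫ y in (0:ℝ)..L, y / L * g y) - ∫ y in (0:ℝ)..L, g y :=
      hform 0 (by simp [hL.le])
    have hLf : Efield L f L = (∫ y in (0:ℝ)..L, y / L * g y) - ∫ y in L..L, g y :=
      hform L (by simp [hL.le])
    rw [h0, hLf, hBzero, intervalIntegral.integral_same]
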